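/- Let r ≥ 1 and N ≥ 0 be integers and let ζ ∈ ℂ be a primitive r-th root of unity. For polynomials b_0, …, b_{r−1} ∈ ℂ[w], the following are equivalent: (i) for every l ∈ {0,…,r−1}, the polynomial Σ_{k=0}^{r−1} ζ^{−lk}·w^k·b_k(w) lies in the ideal (w^N); (ii) for every k ∈ {0,…,r−1}, the coefficient of w^j in b_k vanishes for all j < N − k. In particular, when N ≥ r − 1, the kernel of the ℂ-linear endomorphism of (ℂ[w]/(w^N))^{⊕r} sending (b_k)_{k=0}^{r−1} to (Σ_{k=0}^{r−1} ζ^{−lk}·w^k·b_k)_{l=0}^{r−1} has ℂ-dimension r(r−1)/2. -/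

import Mathlib

open Polynomial

noncomputable section

/-- The ring `ℂ[w]/(w^N)`. -/
def BN (N : ℕ) : Type :=
  Polynomial ℂ ⧸ Ideal.span {(Polynomial.X : Polynomial ℂ) ^ N}

instance (N : ℕ) : CommRing (BN N) :=
  inferInstanceAs (CommRing (Polynomial ℂ ⧸ Ideal.span {(Polynomial.X : Polynomial ℂ) ^ N}))

instance (N : ℕ) : Algebra ℂ (BN N) :=
  inferInstanceAs (Algebra ℂ (Polynomial ℂ ⧸ Ideal.span {(Polynomial.X : Polynomial ℂ) ^ N}))

/-- The class of a polynomial in `ℂ[w]/(w^N)`. -/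
def BN.mk (N : ℕ) (p : Polynomial ℂ) : BN N :=
  (Ideal.Quotient.mk (Ideal.span {(Polynomial.X : Polynomial ℂ) ^ N}) p : _)

/-- The coefficient of `w^j` in the unique polynomial representative of degree `< N` of an
element of `ℂ[w]/(w^N)` (for `j < N`). -/
noncomputable def BN.coeff (N j : ℕ) (b : BN N) : ℂ :=
  ((Quotient.out
      (show Polynomial ℂ ⧸ Ideal.span {(Polynomial.X : Polynomial ℂ) ^ N} from b))
      %ₘ (Polynomial.X ^ N)).coeff j

/-! ### Auxiliary lemmas -/

lemma BN.mk_out (N : ℕ) (x : BN N) :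
    BN.mk N (Quotient.out
      (show Polynomial ℂ ⧸ Ideal.span {(Polynomial.X : Polynomial ℂ) ^ N} from x)) = x :=
  Quotient.out_eq x

lemma BN.modByMonic_congr (N : ℕ) {p q : Polynomial ℂ} (h : BN.mk N p = BN.mk N q) :
    p %ₘ X ^ N = q %ₘ X ^ N := by
  have hd : (X : Polynomial ℂ) ^ N ∣ (p - q) := by
    rw [← Ideal.mem_span_singleton]
    exact Ideal.Quotient.eq.mp h
  have h0 : (p - q) %ₘ X ^ N = 0 := (modByMonic_eq_zero_iff_dvd (monic_X_pow N)).mpr hd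
  have h1 := sub_modByMonic p q ((X : Polynomial ℂ) ^ N)
  rw [h0] at h1
  exact sub_eq_zero.mp h1.symm

lemma BN.coeff_mk (N j : ℕ) (p : Polynomial ℂ) :
    BN.coeff N j (BN.mk N p) = (p %ₘ X ^ N).coeff j :=
  congrArg (fun q => Polynomial.coeff q j)
    (BN.modByMonic_congr N (BN.mk_out N (BN.mk N p)))

lemma BN.mk_surjective (N : ℕ) : Function.Surjective (BN.mk N) :=
  Ideal.Quotient.mk_surjective

lemma BN.mk_modByMonic (N : ℕ) (p : Polynomial ℂ) :
    BN.mk N (p %ₘ X ^ N) = BN.mk N p := by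
  have h := modByMonic_add_div p ((X : Polynomial ℂ) ^ N)
  refine Ideal.Quotient.eq.mpr ?_
  rw [Ideal.mem_span_singleton]
  exact ⟨-(p /ₘ X ^ N), by rw [mul_neg]; linear_combination h⟩

lemma BN.coeff_add (N j : ℕ) (x y : BN N) :
    BN.coeff N j (x + y) = BN.coeff N j x + BN.coeff N j y := by
  obtain ⟨p, rfl⟩ := BN.mk_surjective N x
  obtain ⟨q, rfl⟩ := BN.mk_surjective N y
  rw [show BN.mk N p + BN.mk N q = BN.mk N (p + q) from
    (map_add (Ideal.Quotient.mk _) p q).symm]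
  rw [BN.coeff_mk, BN.coeff_mk, BN.coeff_mk, add_modByMonic, Polynomial.coeff_add]

lemma BN.coeff_smul (N j : ℕ) (z : ℂ) (x : BN N) :
    BN.coeff N j (z • x) = z * BN.coeff N j x := by
  obtain ⟨p, rfl⟩ := BN.mk_surjective N x
  have hs : z • BN.mk N p = BN.mk N (Polynomial.C z * p) := by
    rw [Algebra.smul_def]
    exact (map_mul (Ideal.Quotient.mk _) (Polynomial.C z) p).symm
  rw [hs, BN.coeff_mk, BN.coeff_mk, ← smul_eq_C_mul, smul_modByMonic,
    Polynomial.coeff_smul, smul_eq_mul]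

/-- Part 1 of the statement, as a standalone lemma. -/
lemma statement7_part1 (r N : ℕ) (hr : 1 ≤ r) (ζ : ℂ) (hζ : IsPrimitiveRoot ζ r)
    (b : Fin r → Polynomial ℂ) :
    (∀ l : Fin r,
      (∑ k : Fin r, Polynomial.C ((ζ ^ ((l : ℕ) * (k : ℕ)))⁻¹)
          * Polynomial.X ^ (k : ℕ) * b k) ∈
        Ideal.span {(Polynomial.X : Polynomial ℂ) ^ N})
    ↔ (∀ k : Fin r, ∀ j : ℕ, j < N - (k : ℕ) → (b k).coeff j = 0) := by
  have hz0 : ζ ≠ 0 := fun h => by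
    have h1 : ζ ^ r = 1 := hζ.pow_eq_one
    rw [h, zero_pow (by omega)] at h1
    exact zero_ne_one h1
  have hcoeff : ∀ (l : Fin r) (j : ℕ),
      (∑ k : Fin r, Polynomial.C ((ζ ^ ((l : ℕ) * (k : ℕ)))⁻¹)
          * Polynomial.X ^ (k : ℕ) * b k).coeff j
      = ∑ k : Fin r, (ζ ^ ((l : ℕ) * (k : ℕ)))⁻¹ *
          (if (k : ℕ) ≤ j then (b k).coeff (j - (k : ℕ)) else 0) := by
    intro l j
    rw [finset_sum_coeff]
    refine Finset.sum_congr rfl fun k _ => ?_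
    rw [mul_assoc, coeff_C_mul, mul_comm (Polynomial.X ^ (k : ℕ)) (b k), coeff_mul_X_pow']
  constructor
  · intro h k0 j0 hj0
    have hjN : j0 + (k0 : ℕ) < N := by omega
    set T : Fin r → ℂ := fun k =>
      if (k : ℕ) ≤ j0 + (k0 : ℕ) then (b k).coeff (j0 + (k0 : ℕ) - (k : ℕ)) else 0 with hT
    have hE : ∀ l : Fin r, ∑ k : Fin r, (ζ ^ ((l : ℕ) * (k : ℕ)))⁻¹ * T k = 0 := by
      intro l
      have h1 := Ideal.mem_span_singleton.mp (h l)
      have h2 := (Polynomial.X_pow_dvd_iff.mp h1) _ hjN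
      rw [hcoeff] at h2
      exact h2
    have key : ∀ k : Fin r,
        (∑ l : Fin r, (ζ ^ (k0 : ℕ) * (ζ ^ (k : ℕ))⁻¹) ^ (l : ℕ))
          = if k = k0 then (r : ℂ) else 0 := by
      intro k
      rw [Fin.sum_univ_eq_sum_range (fun l => (ζ ^ (k0 : ℕ) * (ζ ^ (k : ℕ))⁻¹) ^ l) r]
      by_cases hk : k = k0
      · subst hk
        rw [mul_inv_cancel₀ (pow_ne_zero _ hz0)]
        simp
      · have hne1 : ζ ^ (k0 : ℕ) * (ζ ^ (k : ℕ))⁻¹ ≠ 1 := by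
          intro hcon
          rw [mul_inv_eq_one₀ (pow_ne_zero _ hz0)] at hcon
          exact hk (Fin.ext (hζ.pow_inj k0.isLt k.isLt hcon)).symm
        have h1 : ζ ^ r = 1 := hζ.pow_eq_one
        have hxr : (ζ ^ (k0 : ℕ) * (ζ ^ (k : ℕ))⁻¹) ^ r = 1 := by
          rw [mul_pow, inv_pow, ← pow_mul, ← pow_mul, mul_comm (k0 : ℕ) r,
            mul_comm (k : ℕ) r, pow_mul, pow_mul, h1, one_pow, one_pow, inv_one, mul_one]
        rw [geom_sum_eq hne1, hxr, sub_self, zero_div, if_neg hk]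
    have hzero :
        ∑ l : Fin r, ζ ^ ((l : ℕ) * (k0 : ℕ)) *
          (∑ k : Fin r, (ζ ^ ((l : ℕ) * (k : ℕ)))⁻¹ * T k) = 0 := by
      simp only [hE, mul_zero, Finset.sum_const_zero]
    have hswap :
        ∑ k : Fin r, (∑ l : Fin r, (ζ ^ (k0 : ℕ) * (ζ ^ (k : ℕ))⁻¹) ^ (l : ℕ)) * T k
          = ∑ l : Fin r, ζ ^ ((l : ℕ) * (k0 : ℕ)) *
              (∑ k : Fin r, (ζ ^ ((l : ℕ) * (k : ℕ)))⁻¹ * T k) := by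
      simp_rw [Finset.sum_mul, Finset.mul_sum]
      rw [Finset.sum_comm]
      refine Finset.sum_congr rfl fun l _ => Finset.sum_congr rfl fun k _ => ?_
      rw [mul_pow, inv_pow, ← pow_mul, ← pow_mul, mul_comm (k0 : ℕ) (l : ℕ),
        mul_comm (k : ℕ) (l : ℕ), mul_assoc]
    have h2 : ∑ k : Fin r, (if k = k0 then (r : ℂ) else 0) * T k = 0 := by
      calc ∑ k : Fin r, (if k = k0 then (r : ℂ) else 0) * T k
          = ∑ k : Fin r,
              (∑ l : Fin r, (ζ ^ (k0 : ℕ) * (ζ ^ (k : ℕ))⁻¹) ^ (l : ℕ)) * T k := by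
            refine Finset.sum_congr rfl fun k _ => ?_
            rw [key k]
        _ = _ := hswap
        _ = 0 := hzero
    have h3 : ∑ k : Fin r, (if k = k0 then (r : ℂ) else 0) * T k = (r : ℂ) * T k0 := by
      rw [Finset.sum_eq_single k0]
      · rw [if_pos rfl]
      · intro k _ hk
        rw [if_neg hk, zero_mul]
      · intro hk
        exact absurd (Finset.mem_univ k0) hk
    have hr0 : (r : ℂ) ≠ 0 := Nat.cast_ne_zero.mpr (by omega)
    have hT0 : T k0 = 0 := by
      rcases mul_eq_zero.mp (h3 ▸ h2) with h | h
      · exact absurd h hr0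
      · exact h
    rw [hT] at hT0
    simpa [Nat.le_add_left, Nat.add_sub_cancel] using hT0
  · intro h l
    rw [Ideal.mem_span_singleton, Polynomial.X_pow_dvd_iff]
    intro j hj
    rw [hcoeff]
    refine Finset.sum_eq_zero fun k _ => ?_
    split_ifs with hk
    · rw [h k (j - (k : ℕ)) (by omega), mul_zero]
    · rw [mul_zero]

/-- Let `r ≥ 1`, `N ≥ 0`, and let `ζ ∈ ℂ` be a primitive `r`-th root of
unity.  For polynomials `b₀, …, b_{r−1} ∈ ℂ[w]`: the sums `Σₖ ζ^{−lk} wᵏ bₖ(w)` lie in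
`(w^N)` for all `0 ≤ l ≤ r−1` iff the coefficient of `w^j` in `bₖ` vanishes for all
`j < N − k`.  In particular, if `N ≥ r − 1`, the kernel of the `ℂ`-linear endomorphism of
`(ℂ[w]/(w^N))^{⊕r}` sending `(bₖ)ₖ` to `(Σₖ ζ^{−lk} wᵏ bₖ)ₗ` has `ℂ`-dimension
`r(r−1)/2`. -/
theorem statement7 (r N : ℕ) (hr : 1 ≤ r) (ζ : ℂ) (hζ : IsPrimitiveRoot ζ r) :
    (∀ b : Fin r → Polynomial ℂ,
      (∀ l : Fin r,
        (∑ k : Fin r, Polynomial.C ((ζ ^ ((l : ℕ) * (k : ℕ)))⁻¹)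
            * Polynomial.X ^ (k : ℕ) * b k) ∈
          Ideal.span {(Polynomial.X : Polynomial ℂ) ^ N})
      ↔ (∀ k : Fin r, ∀ j : ℕ, j < N - (k : ℕ) → (b k).coeff j = 0))
    ∧ (r - 1 ≤ N →
      ∀ F : (Fin r → BN N) →ₗ[ℂ] (Fin r → BN N),
        (∀ (c : Fin r → BN N) (l : Fin r),
          F c l = ∑ k : Fin r,
            BN.mk N (Polynomial.C ((ζ ^ ((l : ℕ) * (k : ℕ)))⁻¹)
              * Polynomial.X ^ (k : ℕ)) * c k) →
        Module.finrank ℂ (LinearMap.ker F) = r * (r - 1) / 2) := by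
  constructor
  · exact fun b => statement7_part1 r N hr ζ hζ b
  · intro hN F hF
    -- the coefficient map
    set L : (Fin r → BN N) →ₗ[ℂ] ((Σ k : Fin r, Fin (N - (k : ℕ))) → ℂ) :=
      { toFun := fun c i => BN.coeff N (i.2 : ℕ) (c i.1)
        map_add' := fun x y => funext fun i => BN.coeff_add N (i.2 : ℕ) (x i.1) (y i.1)
        map_smul' := fun z x => funext fun i => BN.coeff_smul N (i.2 : ℕ) z (x i.1) }
      with hL
    have hker : LinearMap.ker F = LinearMap.ker L := by
      ext c
      simp only [LinearMap.mem_ker]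
      set b : Fin r → Polynomial ℂ := fun k =>
        (Quotient.out
          (show Polynomial ℂ ⧸ Ideal.span {(Polynomial.X : Polynomial ℂ) ^ N} from c k))
          %ₘ (Polynomial.X ^ N) with hb
      have hrep : ∀ k, BN.mk N (b k) = c k := fun k => by
        rw [hb]
        rw [BN.mk_modByMonic, BN.mk_out]
      have hFc : ∀ l, F c l = BN.mk N (∑ k : Fin r,
          Polynomial.C ((ζ ^ ((l : ℕ) * (k : ℕ)))⁻¹) * Polynomial.X ^ (k : ℕ) * b k) := by
        intro l
        rw [hF]
        refine Eq.symm ?_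
        calc BN.mk N (∑ k : Fin r,
              Polynomial.C ((ζ ^ ((l : ℕ) * (k : ℕ)))⁻¹) * Polynomial.X ^ (k : ℕ) * b k)
            = ∑ k : Fin r, BN.mk N
                (Polynomial.C ((ζ ^ ((l : ℕ) * (k : ℕ)))⁻¹) * Polynomial.X ^ (k : ℕ) * b k) :=
              map_sum (Ideal.Quotient.mk _) _ _
          _ = ∑ k : Fin r, BN.mk N
                (Polynomial.C ((ζ ^ ((l : ℕ) * (k : ℕ)))⁻¹) * Polynomial.X ^ (k : ℕ)) * c k := by
              refine Finset.sum_congr rfl fun k _ => ?_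
              rw [← hrep k]
              exact map_mul (Ideal.Quotient.mk _) _ _
      constructor
      · intro h0
        have hmem : ∀ l : Fin r,
            (∑ k : Fin r, Polynomial.C ((ζ ^ ((l : ℕ) * (k : ℕ)))⁻¹)
              * Polynomial.X ^ (k : ℕ) * b k) ∈
              Ideal.span {(Polynomial.X : Polynomial ℂ) ^ N} := by
          intro l
          rw [← Ideal.Quotient.eq_zero_iff_mem]
          rw [show Ideal.Quotient.mk _ _ = BN.mk N _ from rfl, ← hFc l]
          exact congrFun h0 l
        have := (statement7_part1 r N hr ζ hζ b).mp hmem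
        funext i
        exact this i.1 (i.2 : ℕ) i.2.isLt
      · intro h0
        funext l
        rw [hFc l]
        show Ideal.Quotient.mk _ _ = 0
        rw [Ideal.Quotient.eq_zero_iff_mem]
        refine (statement7_part1 r N hr ζ hζ b).mpr ?_ l
        intro k j hj
        exact congrFun h0 ⟨k, ⟨j, hj⟩⟩
    -- surjectivity of L
    have hLsurj : Function.Surjective L := by
      intro v
      refine ⟨fun k => BN.mk N
        (∑ j : Fin (N - (k : ℕ)), Polynomial.monomial (j : ℕ) (v ⟨k, j⟩)), ?_⟩
      funext i
      obtain ⟨k, j⟩ := i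
      show BN.coeff N (j : ℕ) (BN.mk N _) = v ⟨k, j⟩
      rw [BN.coeff_mk]
      have hdeg : (∑ j' : Fin (N - (k : ℕ)),
          Polynomial.monomial (j' : ℕ) (v ⟨k, j'⟩)).degree
            < ((Polynomial.X : Polynomial ℂ) ^ N).degree := by
        rw [degree_X_pow]
        refine lt_of_le_of_lt (degree_sum_le _ _) ?_
        rw [Finset.sup_lt_iff (by exact_mod_cast WithBot.bot_lt_coe N)]
        intro j' _
        refine lt_of_le_of_lt (degree_monomial_le _ _) ?_
        exact_mod_cast lt_of_lt_of_le j'.isLt (Nat.sub_le N (k : ℕ))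
      rw [(modByMonic_eq_self_iff (monic_X_pow N)).mpr hdeg, finset_sum_coeff,
        Finset.sum_eq_single j]
      · rw [coeff_monomial, if_pos rfl]
      · intro j' _ hj'
        rw [coeff_monomial, if_neg (fun h => hj' (Fin.ext h))]
      · intro hj
        exact absurd (Finset.mem_univ j) hj
    -- dimension count
    haveI hfin : Module.Finite ℂ (BN N) :=
      Module.Finite.of_basis (AdjoinRoot.powerBasis' (monic_X_pow (R := ℂ) N)).basis
    have hrankBN : Module.finrank ℂ (BN N) = N := by
      have h := PowerBasis.finrank (AdjoinRoot.powerBasis' (monic_X_pow (R := ℂ) N))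
      exact (by simpa [natDegree_X_pow] using h : Module.finrank ℂ (AdjoinRoot ((X : Polynomial ℂ) ^ N)) = N)
    have hdom : Module.finrank ℂ (Fin r → BN N) = r * N := by
      rw [Module.finrank_pi_fintype]
      simp [hrankBN, Finset.sum_const, mul_comm]
    have hcodom : Module.finrank ℂ ((Σ k : Fin r, Fin (N - (k : ℕ))) → ℂ)
        = ∑ k : Fin r, (N - (k : ℕ)) := by
      rw [Module.finrank_fintype_fun_eq_card, Fintype.card_sigma]
      simp
    have hrange : Module.finrank ℂ (LinearMap.range L)
        = ∑ k : Fin r, (N - (k : ℕ)) := by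
      rw [LinearMap.range_eq_top.mpr hLsurj, finrank_top]
      exact hcodom
    have hRN := LinearMap.finrank_range_add_finrank_ker L
    rw [hrange, hdom] at hRN
    have hsum : ∑ k : Fin r, (N - (k : ℕ)) + ∑ k : Fin r, (k : ℕ) = r * N := by
      rw [← Finset.sum_add_distrib]
      have hkN : ∀ k : Fin r, (N - (k : ℕ)) + (k : ℕ) = N := fun k =>
        Nat.sub_add_cancel (by have := k.isLt; omega)
      simp only [hkN, Finset.sum_const, Finset.card_univ, Fintype.card_fin, smul_eq_mul]
    have hgauss : ∑ k : Fin r, (k : ℕ) = r * (r - 1) / 2 := by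
      rw [Fin.sum_univ_eq_sum_range (fun i => i) r]
      exact Finset.sum_range_id r
    have hle : r * (r - 1) / 2 ≤ r * N := by omega
    rw [hker]
    omega
  
end
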